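/- Let ψ_ABC be a pure tripartite state on finite-dimensional systems. Then N_sq(A;C|B)_ψ = (1/2)·I(A;C|B)_ψ = (1/2)·I(A;C)_ψ, where I(A;C)_ψ := S(A)_ψ + S(C)_ψ − S(AC)_ψ is the quantum mutual information. Moreover, if ψ_ABC = φ_AC ⊗ ϕ_B is a product of a pure state φ on AC and a pure state ϕ on B, then N_sq(A;C|B)_ψ = (1/2)·I(A;C)_φ = S(A)_φ. -/

import Mathlib

open Matrix
open scoped ComplexOrder
open scoped BigOperators

noncomputable section

namespace SQNM

/-- A density matrix: positive semidefinite with unit trace. -/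
def IsDensity {n : Type*} [Fintype n] (ρ : Matrix n n ℂ) : Prop :=
  ρ.PosSemidef ∧ ρ.trace = 1

/-- A pure state: a rank-one projector `|v⟩⟨v|`. -/
def IsPure {n : Type*} (ρ : Matrix n n ℂ) : Prop :=
  ∃ v : n → ℂ, ρ = Matrix.vecMulVec v (star v)

/-- von Neumann entropy (in bits, i.e. base-2 logarithm), via the eigenvalues. -/
def vnEntropy {n : Type*} [Fintype n] [DecidableEq n] (ρ : Matrix n n ℂ) : ℝ :=
  if h : ρ.IsHermitian then -∑ i, h.eigenvalues i * Real.logb 2 (h.eigenvalues i) else 0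

/-- Trace norm `‖M‖₁ = Tr √(MᴴM)`. -/
def traceNorm {n : Type*} [Fintype n] [DecidableEq n] (M : Matrix n n ℂ) : ℝ :=
  ((((Matrix.posSemidef_conjTranspose_mul_self M).1.eigenvectorUnitary : Matrix n n ℂ) *
      Matrix.diagonal (fun i => ((Real.sqrt
        ((Matrix.posSemidef_conjTranspose_mul_self M).1.eigenvalues i) : ℝ) : ℂ)) *
      (star (Matrix.posSemidef_conjTranspose_mul_self M).1.eigenvectorUnitary :
        Matrix n n ℂ))).trace.re

/-- Binary Shannon entropy (base 2). -/
def binEnt (x : ℝ) : ℝ := -(x * Real.logb 2 x) - (1 - x) * Real.logb 2 (1 - x)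

section Tripartite

variable {α β γ : Type*} [Fintype α] [Fintype β] [Fintype γ]
variable [DecidableEq α] [DecidableEq β] [DecidableEq γ]

/-- Marginal on `A × B` of a tripartite state. -/
def margAB (ρ : Matrix (α × β × γ) (α × β × γ) ℂ) : Matrix (α × β) (α × β) ℂ :=
  fun x y => ∑ c : γ, ρ (x.1, x.2, c) (y.1, y.2, c)

/-- Marginal on `B × C` of a tripartite state. -/
def margBC (ρ : Matrix (α × β × γ) (α × β × γ) ℂ) : Matrix (β × γ) (β × γ) ℂ :=
  fun x y => ∑ a : α, ρ (a, x.1, x.2) (a, y.1, y.2)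

/-- Marginal on `A × C` of a tripartite state. -/
def margAC (ρ : Matrix (α × β × γ) (α × β × γ) ℂ) : Matrix (α × γ) (α × γ) ℂ :=
  fun x y => ∑ b : β, ρ (x.1, b, x.2) (y.1, b, y.2)

/-- Marginal on `A`. -/
def margA (ρ : Matrix (α × β × γ) (α × β × γ) ℂ) : Matrix α α ℂ :=
  fun a a' => ∑ b : β, ∑ c : γ, ρ (a, b, c) (a', b, c)

/-- Marginal on `B`. -/
def margB (ρ : Matrix (α × β × γ) (α × β × γ) ℂ) : Matrix β β ℂ :=
  fun b b' => ∑ a : α, ∑ c : γ, ρ (a, b, c) (a, b', c)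

/-- Marginal on `C`. -/
def margC (ρ : Matrix (α × β × γ) (α × β × γ) ℂ) : Matrix γ γ ℂ :=
  fun c c' => ∑ a : α, ∑ b : β, ρ (a, b, c) (a, b, c')

/-- Quantum conditional mutual information
`I(A;C|B)_ρ = S(AB) + S(BC) − S(ABC) − S(B)` (in bits). -/
def qcmi (ρ : Matrix (α × β × γ) (α × β × γ) ℂ) : ℝ :=
  vnEntropy (margAB ρ) + vnEntropy (margBC ρ) - vnEntropy ρ - vnEntropy (margB ρ)

/-- Quantum mutual information `I(A;C)` of the `AC` marginal. -/
def mutInfoAC (ρ : Matrix (α × β × γ) (α × β × γ) ℂ) : ℝ :=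
  vnEntropy (margA ρ) + vnEntropy (margC ρ) - vnEntropy (margAC ρ)

/-- Coherent information `I(A⟩C) = S(C) − S(AC)` of the `AC` marginal. -/
def cohInfoAC (ρ : Matrix (α × β × γ) (α × β × γ) ℂ) : ℝ :=
  vnEntropy (margC ρ) - vnEntropy (margAC ρ)

/-- Coherent information `I(C⟩A) = S(A) − S(AC)` of the `AC` marginal. -/
def cohInfoCA (ρ : Matrix (α × β × γ) (α × β × γ) ℂ) : ℝ :=
  vnEntropy (margA ρ) - vnEntropy (margAC ρ)

/-- Partial trace over the extension system `E` of a state on `A × B × C × E`. -/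
def traceExt {ε : Type*} [Fintype ε] (τ : Matrix (α × β × γ × ε) (α × β × γ × ε) ℂ) :
    Matrix (α × β × γ) (α × β × γ) ℂ :=
  fun x y => ∑ e : ε, τ (x.1, x.2.1, x.2.2, e) (y.1, y.2.1, y.2.2, e)

/-- Regroup a state on `A × B × C × E` as a tripartite state on `A × (B × E) × C`,
so that `B E` becomes the conditioning system. -/
def condExt {ε : Type*} (τ : Matrix (α × β × γ × ε) (α × β × γ × ε) ℂ) :
    Matrix (α × (β × ε) × γ) (α × (β × ε) × γ) ℂ :=
  fun x y => τ (x.1, x.2.1.1, x.2.2, x.2.1.2) (y.1, y.2.1.1, y.2.2, y.2.1.2)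

/-- Squashed quantum non-Markovianity
`N_sq(A;C|B)_ρ = (1/2) inf_{ρ_{ABCE}} I(A;C|BE)`, the infimum running over all
finite-dimensional extensions of `ρ` (every finite-dimensional extension system
can be relabelled to some `Fin d`). -/
def sQNM (ρ : Matrix (α × β × γ) (α × β × γ) ℂ) : ℝ :=
  (1/2) * sInf { x : ℝ |
    ∃ (d : ℕ) (τ : Matrix (α × β × γ × Fin d) (α × β × γ × Fin d) ℂ),
      IsDensity τ ∧ traceExt τ = ρ ∧ x = qcmi (condExt τ) }

end Tripartite

/-- Squashed entanglement of a bipartite state `σ_{AC}`: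
`E_sq(A;C)_σ = (1/2) inf_{σ_{ACF}} I(A;C|F)`. -/
def sqEnt {α γ : Type*} [Fintype α] [Fintype γ] [DecidableEq α] [DecidableEq γ]
    (σ : Matrix (α × γ) (α × γ) ℂ) : ℝ :=
  (1/2) * sInf { x : ℝ |
    ∃ (d : ℕ) (τ : Matrix (α × Fin d × γ) (α × Fin d × γ) ℂ),
      IsDensity τ ∧ margAC τ = σ ∧ x = qcmi τ }

section Channels

variable {n m : Type*}

/-- Apply a map `Φ` on the right tensor factor: `(id_κ ⊗ Φ) M`. -/
def applyRight {κ : Type*} (Φ : Matrix n n ℂ → Matrix m m ℂ)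
    (M : Matrix (κ × n) (κ × n) ℂ) : Matrix (κ × m) (κ × m) ℂ :=
  fun x y => Φ (fun u v => M (x.1, u) (y.1, v)) x.2 y.2

/-- A completely positive (linear) map on matrices. -/
def IsCPMap [Fintype n] [Fintype m] (Φ : Matrix n n ℂ → Matrix m m ℂ) : Prop :=
  (∀ (c : ℂ) (M N : Matrix n n ℂ), Φ (c • M + N) = c • Φ M + Φ N) ∧
  (∀ (k : ℕ) (M : Matrix (Fin k × n) (Fin k × n) ℂ),
      M.PosSemidef → (applyRight Φ M).PosSemidef)

/-- A quantum channel: completely positive and trace preserving linear map. -/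
def IsCPTP [Fintype n] [Fintype m] (Φ : Matrix n n ℂ → Matrix m m ℂ) : Prop :=
  IsCPMap Φ ∧ ∀ M : Matrix n n ℂ, (Φ M).trace = M.trace

end Channels

section Apply

variable {α β γ : Type*}

/-- Apply a map on the `A` subsystem of a tripartite state: `(Φ ⊗ id_{BC}) ρ`. -/
def applyA {α' : Type*} (Φ : Matrix α α ℂ → Matrix α' α' ℂ)
    (ρ : Matrix (α × β × γ) (α × β × γ) ℂ) : Matrix (α' × β × γ) (α' × β × γ) ℂ :=
  fun x y => Φ (fun a a' => ρ (a, x.2) (a', y.2)) x.1 y.1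

/-- Apply a map on the `B` subsystem of a tripartite state: `(id_A ⊗ Φ ⊗ id_C) ρ`. -/
def applyB {β' : Type*} (Φ : Matrix β β ℂ → Matrix β' β' ℂ)
    (ρ : Matrix (α × β × γ) (α × β × γ) ℂ) : Matrix (α × β' × γ) (α × β' × γ) ℂ :=
  fun x y => Φ (fun b b' => ρ (x.1, b, x.2.2) (y.1, b', y.2.2)) x.2.1 y.2.1

/-- Apply a map on the `C` subsystem of a tripartite state: `(id_{AB} ⊗ Φ) ρ`. -/
def applyC {γ' : Type*} (Φ : Matrix γ γ ℂ → Matrix γ' γ' ℂ)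
    (ρ : Matrix (α × β × γ) (α × β × γ) ℂ) : Matrix (α × β × γ') (α × β × γ') ℂ :=
  fun x y => Φ (fun c c' => ρ (x.1, x.2.1, c) (y.1, y.2.1, c')) x.2.2 y.2.2

end Apply

/-- The `n`-fold tensor power of a tripartite state, with the copies of each
subsystem grouped together: a state on `A^n × B^n × C^n`. -/
def tpow {α β γ : Type*} (ρ : Matrix (α × β × γ) (α × β × γ) ℂ) (n : ℕ) :
    Matrix ((Fin n → α) × (Fin n → β) × (Fin n → γ))
           ((Fin n → α) × (Fin n → β) × (Fin n → γ)) ℂ :=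
  fun x y => ∏ i, ρ (x.1 i, x.2.1 i, x.2.2 i) (y.1 i, y.2.1 i, y.2.2 i)


section Helpers1
open Polynomial
variable {n : Type*} [Fintype n] [DecidableEq n]

lemma charpoly_conj {P M Q : Matrix n n ℂ} (hPQ : P * Q = 1) (hQP : Q * P = 1) :
    (P * M * Q).charpoly = M.charpoly := by
  have hPQ' : (C : ℂ →+* ℂ[X]).mapMatrix P * (C : ℂ →+* ℂ[X]).mapMatrix Q = 1 := by
    rw [← _root_.map_mul, hPQ, _root_.map_one]
  have hQP' : (C : ℂ →+* ℂ[X]).mapMatrix Q * (C : ℂ →+* ℂ[X]).mapMatrix P = 1 := by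
    rw [← _root_.map_mul, hQP, _root_.map_one]
  have h1 : (P * M * Q).charmatrix
      = (C : ℂ →+* ℂ[X]).mapMatrix P * M.charmatrix * (C : ℂ →+* ℂ[X]).mapMatrix Q := by
    unfold Matrix.charmatrix
    rw [Matrix.mul_sub, Matrix.sub_mul, ← _root_.map_mul, ← _root_.map_mul]
    congr 1
    calc Matrix.scalar n (X : ℂ[X])
        = Matrix.scalar n (X : ℂ[X]) * ((C : ℂ →+* ℂ[X]).mapMatrix P * (C : ℂ →+* ℂ[X]).mapMatrix Q) := by
          rw [hPQ', mul_one]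
      _ = (C : ℂ →+* ℂ[X]).mapMatrix P * Matrix.scalar n (X : ℂ[X]) * (C : ℂ →+* ℂ[X]).mapMatrix Q := by
          rw [← Matrix.mul_assoc, (Matrix.scalar_commute (X : ℂ[X]) (Commute.all _) _).eq]
  rw [Matrix.charpoly, Matrix.charpoly, h1, det_mul, det_mul]
  rw [mul_comm (det _) (charmatrix M).det, mul_assoc, ← det_mul, hPQ', det_one, mul_one]

lemma charpoly_diag (d : n → ℂ) :
    (Matrix.diagonal d).charpoly = ∏ i, (X - C (d i)) := by
  have h : (Matrix.diagonal d).charmatrix = Matrix.diagonal (fun i => X - C (d i)) := by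
    ext i j
    by_cases h : i = j
    · subst h; simp [Matrix.charmatrix_apply, Matrix.diagonal_apply]
    · simp [Matrix.charmatrix_apply, Matrix.diagonal_apply, h]
  rw [Matrix.charpoly, h, Matrix.det_diagonal]

lemma charpoly_herm (M : Matrix n n ℂ) (h : M.IsHermitian) :
    M.charpoly = ∏ i, (X - C ((h.eigenvalues i : ℂ))) := by
  have hU1 : (h.eigenvectorUnitary : Matrix n n ℂ) * star (h.eigenvectorUnitary : Matrix n n ℂ) = 1 :=
    Unitary.coe_mul_star_self _
  have hU2 : star (h.eigenvectorUnitary : Matrix n n ℂ) * (h.eigenvectorUnitary : Matrix n n ℂ) = 1 :=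
    Unitary.coe_star_mul_self _
  conv_lhs => rw [h.spectral_theorem, Unitary.conjStarAlgAut_apply]
  rw [charpoly_conj hU1 hU2, charpoly_diag]
  rfl

lemma trace_herm (M : Matrix n n ℂ) (h : M.IsHermitian) :
    M.trace = ∑ i, (h.eigenvalues i : ℂ) := by
  have hU2 : star (h.eigenvectorUnitary : Matrix n n ℂ) * (h.eigenvectorUnitary : Matrix n n ℂ) = 1 :=
    Unitary.coe_star_mul_self _
  conv_lhs => rw [h.spectral_theorem, Unitary.conjStarAlgAut_apply]
  rw [Matrix.trace_mul_cycle, hU2, Matrix.one_mul, Matrix.trace_diagonal]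
  rfl

end Helpers1

section Helpers2
open Polynomial
variable {n : Type*} [Fintype n] [DecidableEq n]
def entSum (s : Multiset ℂ) : ℝ := -(s.map (fun z => z.re * Real.logb 2 z.re)).sum

lemma entSum_add (s t : Multiset ℂ) : entSum (s + t) = entSum s + entSum t := by
  simp [entSum, neg_add, add_comm]

lemma entSum_nsmul_zero (k : ℕ) : entSum (k • ({0} : Multiset ℂ)) = 0 := by
  simp [entSum, Multiset.map_nsmul, Multiset.sum_nsmul]

lemma vnEntropy_eq_entSum (M : Matrix n n ℂ) (h : M.IsHermitian) :
    vnEntropy M = entSum M.charpoly.roots := by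
  rw [vnEntropy, dif_pos h, entSum, charpoly_herm M h]
  have h1 : (∏ i, (X - C ((h.eigenvalues i : ℂ))))
      = ((Finset.univ.val.map (fun i => ((h.eigenvalues i : ℂ)))).map (fun a => X - C a)).prod := by
    rw [Multiset.map_map]
    rfl
  rw [h1, Polynomial.roots_multiset_prod_X_sub_C, Multiset.map_map]
  have h2 : ∀ i : n, ((fun z : ℂ => z.re * Real.logb 2 z.re) ∘ fun i => ((h.eigenvalues i : ℂ))) i
      = h.eigenvalues i * Real.logb 2 (h.eigenvalues i) := by
    intro i; simp
  rw [Multiset.map_congr rfl (fun i _ => h2 i)]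
  congr 1

lemma vnEntropy_submatrix {m : Type*} [Fintype m] [DecidableEq m]
    (M : Matrix n n ℂ) (h : M.IsHermitian) (e : m ≃ n) :
    vnEntropy (M.submatrix e e) = vnEntropy M := by
  rw [vnEntropy_eq_entSum _ (h.submatrix e), vnEntropy_eq_entSum _ h]
  congr 1
  have h1 : M.submatrix e e = Matrix.reindex e.symm e.symm M := rfl
  rw [h1, Matrix.charpoly_reindex]

lemma charpoly_transpose (M : Matrix n n ℂ) : Mᵀ.charpoly = M.charpoly := by
  rw [Matrix.charpoly, Matrix.charpoly, ← Matrix.det_transpose (charmatrix M)]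
  congr 1
  ext i j
  by_cases h : i = j
  · subst h; simp [Matrix.charmatrix_apply]
  · have h' : ¬ (j = i) := fun hh => h hh.symm
    simp [Matrix.charmatrix_apply, Matrix.diagonal_apply, h, h']

lemma charpoly_zero_mat : (0 : Matrix n n ℂ).charpoly = X ^ Fintype.card n := by
  have : (0 : Matrix n n ℂ) = Matrix.diagonal (fun _ => 0) := by simp
  rw [this, charpoly_diag]
  simp [Finset.prod_const, Finset.card_univ]
end Helpers2

section Helpers3
open Polynomial
open Kronecker

variable {m p : Type*} [Fintype m] [Fintype p] [DecidableEq m] [DecidableEq p]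

lemma charpoly_fromBlocks_zero₁₂ (A : Matrix m m ℂ) (Cm : Matrix p m ℂ) (D : Matrix p p ℂ) :
    (Matrix.fromBlocks A 0 Cm D).charpoly = A.charpoly * D.charpoly := by
  have h : (Matrix.fromBlocks A 0 Cm D).charmatrix
      = Matrix.fromBlocks A.charmatrix 0 (-(Cm.map C)) D.charmatrix := by
    ext i j
    rcases i with i | i <;> rcases j with j | j <;>
      simp [Matrix.charmatrix_apply, Matrix.diagonal_apply, Matrix.fromBlocks]
  rw [Matrix.charpoly, h, Matrix.det_fromBlocks_zero₁₂, Matrix.charpoly, Matrix.charpoly]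

lemma charpoly_AB_BA (A : Matrix m p ℂ) (B : Matrix p m ℂ) :
    (A * B).charpoly * X ^ (Fintype.card p) = (B * A).charpoly * X ^ (Fintype.card m) := by
  have hS : (Matrix.fromBlocks 1 A 0 1 : Matrix (m ⊕ p) (m ⊕ p) ℂ)
      * Matrix.fromBlocks 1 (-A) 0 1 = 1 := by
    rw [Matrix.fromBlocks_multiply]
    simp
  have hS' : (Matrix.fromBlocks 1 (-A) 0 1 : Matrix (m ⊕ p) (m ⊕ p) ℂ)
      * Matrix.fromBlocks 1 A 0 1 = 1 := by
    rw [Matrix.fromBlocks_multiply]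
    simp
  have hM : (Matrix.fromBlocks (A * B) 0 B 0 : Matrix (m ⊕ p) (m ⊕ p) ℂ)
      = Matrix.fromBlocks 1 A 0 1 * Matrix.fromBlocks 0 0 B (B * A)
        * Matrix.fromBlocks 1 (-A) 0 1 := by
    rw [Matrix.fromBlocks_multiply, Matrix.fromBlocks_multiply]
    simp [Matrix.mul_assoc]
  have h1 : (Matrix.fromBlocks (A * B) 0 B 0 : Matrix (m ⊕ p) (m ⊕ p) ℂ).charpoly
      = (Matrix.fromBlocks 0 0 B (B * A) : Matrix (m ⊕ p) (m ⊕ p) ℂ).charpoly := by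
    rw [hM]; exact charpoly_conj hS hS'
  rw [charpoly_fromBlocks_zero₁₂, charpoly_fromBlocks_zero₁₂, charpoly_zero_mat,
    charpoly_zero_mat] at h1
  rw [h1, mul_comm]

lemma vnEntropy_gram_comm (v : m × p → ℂ) :
    vnEntropy (Matrix.of fun x x' : m => ∑ y, v (x, y) * star (v (x', y)))
      = vnEntropy (Matrix.of fun y y' : p => ∑ x, v (x, y) * star (v (x, y'))) := by
  set W : Matrix m p ℂ := Matrix.of fun x y => v (x, y) with hW
  have hL : (Matrix.of fun x x' : m => ∑ y, v (x, y) * star (v (x', y))) = W * Wᴴ := by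
    ext x x'
    simp [Matrix.mul_apply, hW, Matrix.conjTranspose_apply]
  have hR : (Matrix.of fun y y' : p => ∑ x, v (x, y) * star (v (x, y'))) = (Wᴴ * W)ᵀ := by
    ext y y'
    simp [Matrix.mul_apply, hW, Matrix.conjTranspose_apply, Matrix.transpose_apply, mul_comm]
  rw [hL, hR]
  rw [vnEntropy_eq_entSum _ (Matrix.isHermitian_mul_conjTranspose_self W),
    vnEntropy_eq_entSum _ (Matrix.isHermitian_conjTranspose_mul_self W).transpose,
    charpoly_transpose]
  have hroots : (W * Wᴴ).charpoly.roots + (Fintype.card p) • ({0} : Multiset ℂ)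
      = (Wᴴ * W).charpoly.roots + (Fintype.card m) • ({0} : Multiset ℂ) := by
    have h2 := charpoly_AB_BA W Wᴴ
    have h3 : ((W * Wᴴ).charpoly * X ^ (Fintype.card p)).roots
        = ((Wᴴ * W).charpoly * X ^ (Fintype.card m)).roots := by rw [h2]
    rwa [Polynomial.roots_mul (mul_ne_zero (Matrix.charpoly_monic _).ne_zero
        (pow_ne_zero _ Polynomial.X_ne_zero)),
      Polynomial.roots_mul (mul_ne_zero (Matrix.charpoly_monic _).ne_zero
        (pow_ne_zero _ Polynomial.X_ne_zero)),
      Polynomial.roots_pow, Polynomial.roots_pow, Polynomial.roots_X] at h3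
  have := congrArg entSum hroots
  rwa [entSum_add, entSum_add, entSum_nsmul_zero, entSum_nsmul_zero, add_zero, add_zero] at this

end Helpers3

set_option linter.unusedSectionVars false
section Helpers4
open Polynomial
open Kronecker

variable {n : Type*} [Fintype n] [DecidableEq n]

lemma vecMulVec_isHermitian (v : n → ℂ) : (Matrix.vecMulVec v (star v)).IsHermitian := by
  ext i j
  simp [Matrix.conjTranspose_apply, Matrix.vecMulVec_apply, mul_comm]

lemma sum_mul_star_eq_one {v : n → ℂ} (hv : (Matrix.vecMulVec v (star v)).trace = 1) :
    ∑ i, v i * star (v i) = 1 := by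
  simpa [Matrix.trace, Matrix.diag, Matrix.vecMulVec_apply] using hv

lemma vnEntropy_pure (v : n → ℂ) (hv : (Matrix.vecMulVec v (star v)).trace = 1) :
    vnEntropy (Matrix.vecMulVec v (star v)) = 0 := by
  set M := Matrix.vecMulVec v (star v) with hM
  have hsum : ∑ i, v i * star (v i) = 1 := sum_mul_star_eq_one hv
  have hH : M.IsHermitian := vecMulVec_isHermitian v
  have hMM : M * M = M := by
    ext i j
    simp only [Matrix.mul_apply, hM, Matrix.vecMulVec_apply, Pi.star_apply]
    calc ∑ k, v i * star (v k) * (v k * star (v j))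
        = (∑ k, v k * star (v k)) * (v i * star (v j)) := by
          rw [Finset.sum_mul]; congr 1; ext k; ring
      _ = v i * star (v j) := by rw [hsum, one_mul]
  -- diagonal form is idempotent
  have hdiag : star (hH.eigenvectorUnitary : Matrix n n ℂ) * M * (hH.eigenvectorUnitary : Matrix n n ℂ)
      = Matrix.diagonal (RCLike.ofReal ∘ hH.eigenvalues) := by
    have := hH.conjStarAlgAut_star_eigenvectorUnitary
    rwa [Unitary.conjStarAlgAut_star_apply] at this
  set U : Matrix n n ℂ := (hH.eigenvectorUnitary : Matrix n n ℂ) with hU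
  have hU1 : U * star U = 1 := Unitary.coe_mul_star_self _
  have hDD : (Matrix.diagonal (RCLike.ofReal ∘ hH.eigenvalues) : Matrix n n ℂ)
      * Matrix.diagonal (RCLike.ofReal ∘ hH.eigenvalues)
      = Matrix.diagonal (RCLike.ofReal ∘ hH.eigenvalues) := by
    rw [← hdiag]
    calc star U * M * U * (star U * M * U)
        = star U * M * (U * star U) * M * U := by
          simp only [Matrix.mul_assoc]
      _ = star U * (M * M) * U := by rw [hU1]; simp only [Matrix.mul_one, Matrix.mul_assoc]
      _ = star U * M * U := by rw [hMM, Matrix.mul_assoc]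
  have heig : ∀ i, hH.eigenvalues i = 0 ∨ hH.eigenvalues i = 1 := by
    intro i
    have h1 := congrFun (congrFun hDD i) i
    rw [Matrix.diagonal_mul_diagonal] at h1
    simp only [Matrix.diagonal_apply_eq, Pi.mul_apply, Function.comp] at h1
    have h2 : (hH.eigenvalues i) * (hH.eigenvalues i) = hH.eigenvalues i := by
      exact_mod_cast h1
    have h3 : hH.eigenvalues i * (hH.eigenvalues i - 1) = 0 := by ring_nf; linarith [h2]
    rcases mul_eq_zero.mp h3 with h | h
    · exact Or.inl h
    · exact Or.inr (by linarith)
  rw [vnEntropy, dif_pos hH]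
  have : ∀ i ∈ Finset.univ, hH.eigenvalues i * Real.logb 2 (hH.eigenvalues i) = 0 := by
    intro i _
    rcases heig i with h | h <;> simp [h]
  rw [Finset.sum_congr rfl this]
  simp

end Helpers4

set_option linter.unusedSectionVars false
section Helpers5
open Polynomial
open Kronecker

variable {m p : Type*} [Fintype m] [Fintype p] [DecidableEq m] [DecidableEq p]

lemma kron_isHermitian {M : Matrix m m ℂ} {σ : Matrix p p ℂ}
    (hM : M.IsHermitian) (hσ : σ.IsHermitian) : (M ⊗ₖ σ).IsHermitian := by
  ext i j
  simp only [Matrix.conjTranspose_apply, Matrix.kroneckerMap_apply, star_mul']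
  rw [mul_comm, hM.apply, hσ.apply, mul_comm]

lemma mul_logb_mul (a b : ℝ) (ha : 0 ≤ a) (hb : 0 ≤ b) :
    a * b * Real.logb 2 (a * b) = (a * Real.logb 2 a) * b + a * (b * Real.logb 2 b) := by
  rcases eq_or_lt_of_le ha with h | h
  · simp [← h]
  rcases eq_or_lt_of_le hb with h' | h'
  · simp [← h']
  rw [Real.logb_mul h.ne' h'.ne']
  ring

lemma vnEntropy_kron {M : Matrix m m ℂ} {σ : Matrix p p ℂ}
    (hM : M.PosSemidef) (hσ : σ.PosSemidef) (hMt : M.trace = 1) (hσt : σ.trace = 1) :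
    vnEntropy (M ⊗ₖ σ) = vnEntropy M + vnEntropy σ := by
  have hMH := hM.1
  have hσH := hσ.1
  set lam := hMH.eigenvalues with hlam
  set mu := hσH.eigenvalues with hmu
  have hsl : ∑ i, lam i = 1 := by
    have h1 := trace_herm M hMH
    rw [hMt] at h1
    have : ((∑ i, lam i : ℝ) : ℂ) = 1 := by push_cast; rw [← h1]
    exact_mod_cast this
  have hsm : ∑ j, mu j = 1 := by
    have h1 := trace_herm σ hσH
    rw [hσt] at h1
    have : ((∑ j, mu j : ℝ) : ℂ) = 1 := by push_cast; rw [← h1]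
    exact_mod_cast this
  -- charpoly of the Kronecker product
  have hU1 : (hMH.eigenvectorUnitary : Matrix m m ℂ) * star (hMH.eigenvectorUnitary : Matrix m m ℂ) = 1 :=
    Unitary.coe_mul_star_self _
  have hU2 : star (hMH.eigenvectorUnitary : Matrix m m ℂ) * (hMH.eigenvectorUnitary : Matrix m m ℂ) = 1 :=
    Unitary.coe_star_mul_self _
  have hV1 : (hσH.eigenvectorUnitary : Matrix p p ℂ) * star (hσH.eigenvectorUnitary : Matrix p p ℂ) = 1 :=
    Unitary.coe_mul_star_self _
  have hV2 : star (hσH.eigenvectorUnitary : Matrix p p ℂ) * (hσH.eigenvectorUnitary : Matrix p p ℂ) = 1 :=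
    Unitary.coe_star_mul_self _
  have hcp : (M ⊗ₖ σ).charpoly
      = (Matrix.diagonal (fun q : m × p => ((lam q.1 : ℂ)) * ((mu q.2 : ℂ)))).charpoly := by
    conv_lhs => rw [hMH.spectral_theorem, hσH.spectral_theorem, Unitary.conjStarAlgAut_apply,
        Unitary.conjStarAlgAut_apply]
    rw [Matrix.mul_kronecker_mul, Matrix.mul_kronecker_mul]
    have hPQ : ((hMH.eigenvectorUnitary : Matrix m m ℂ) ⊗ₖ (hσH.eigenvectorUnitary : Matrix p p ℂ))
        * ((star (hMH.eigenvectorUnitary : Matrix m m ℂ)) ⊗ₖ (star (hσH.eigenvectorUnitary : Matrix p p ℂ))) = 1 := by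
      rw [← Matrix.mul_kronecker_mul, hU1, hV1, Matrix.one_kronecker_one]
    have hQP : ((star (hMH.eigenvectorUnitary : Matrix m m ℂ)) ⊗ₖ (star (hσH.eigenvectorUnitary : Matrix p p ℂ)))
        * ((hMH.eigenvectorUnitary : Matrix m m ℂ) ⊗ₖ (hσH.eigenvectorUnitary : Matrix p p ℂ)) = 1 := by
      rw [← Matrix.mul_kronecker_mul, hU2, hV2, Matrix.one_kronecker_one]
    rw [charpoly_conj hPQ hQP, Matrix.diagonal_kronecker_diagonal]
    rfl
  have hherm : (M ⊗ₖ σ).IsHermitian := kron_isHermitian hMH hσH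
  rw [vnEntropy_eq_entSum _ hherm, hcp, charpoly_diag]
  have h1 : (∏ q : m × p, (X - C (((lam q.1 : ℂ)) * ((mu q.2 : ℂ)))))
      = ((Finset.univ.val.map (fun q : m × p => ((lam q.1 : ℂ)) * ((mu q.2 : ℂ)))).map
          (fun a => X - C a)).prod := by
    rw [Multiset.map_map]; rfl
  rw [h1, Polynomial.roots_multiset_prod_X_sub_C, entSum, Multiset.map_map]
  have h2 : ∀ q : m × p, ((fun z : ℂ => z.re * Real.logb 2 z.re) ∘
      fun q : m × p => ((lam q.1 : ℂ)) * ((mu q.2 : ℂ))) q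
      = (lam q.1 * Real.logb 2 (lam q.1)) * mu q.2 + lam q.1 * (mu q.2 * Real.logb 2 (mu q.2)) := by
    intro q
    have : (((lam q.1 : ℂ)) * ((mu q.2 : ℂ))).re = lam q.1 * mu q.2 := by
      rw [← Complex.ofReal_mul, Complex.ofReal_re]
    simp only [Function.comp_apply, this]
    exact mul_logb_mul _ _ (hM.eigenvalues_nonneg q.1) (hσ.eigenvalues_nonneg q.2)
  rw [Multiset.map_congr rfl (fun q _ => h2 q)]
  have h3 : (Finset.univ.val.map (fun q : m × p =>
      (lam q.1 * Real.logb 2 (lam q.1)) * mu q.2 + lam q.1 * (mu q.2 * Real.logb 2 (mu q.2)))).sum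
      = ∑ q : m × p, ((lam q.1 * Real.logb 2 (lam q.1)) * mu q.2
          + lam q.1 * (mu q.2 * Real.logb 2 (mu q.2))) := rfl
  rw [h3, Fintype.sum_prod_type]
  have h4 : ∑ i, ∑ j, ((lam i * Real.logb 2 (lam i)) * mu j
      + lam i * (mu j * Real.logb 2 (mu j)))
      = (∑ i, lam i * Real.logb 2 (lam i)) * (∑ j, mu j)
        + (∑ i, lam i) * (∑ j, mu j * Real.logb 2 (mu j)) := by
    rw [Finset.sum_mul, Finset.sum_mul]
    rw [← Finset.sum_add_distrib]
    congr 1; ext i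
    rw [Finset.sum_add_distrib, ← Finset.mul_sum, ← Finset.mul_sum, Finset.mul_sum]
  rw [h4, hsl, hsm, one_mul, mul_one, vnEntropy, dif_pos hMH, vnEntropy, dif_pos hσH]
  ring

end Helpers5

section Helpers6
set_option linter.unusedSectionVars false

variable {κ ε : Type*} [Fintype κ] [DecidableEq κ] [Fintype ε] [DecidableEq ε]

lemma ext_of_pure (T : Matrix (κ × ε) (κ × ε) ℂ) (hT : T.PosSemidef) (v : κ → ℂ)
    (hsum : ∑ i, v i * star (v i) = 1)
    (hptr : ∀ x y, ∑ e, T (x, e) (y, e) = v x * star (v y)) :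
    ∃ σ : Matrix ε ε ℂ, σ.PosSemidef ∧ σ.trace = 1 ∧
      ∀ x f y e, T (x, f) (y, e) = v x * star (v y) * σ f e := by
  classical
  have hnorm : ∑ i, star (v i) * v i = 1 := by
    rw [← hsum]; congr 1; ext i; ring
  -- kernel step
  have hker : ∀ (w : κ → ℂ), (∑ y, star (v y) * w y) = 0 →
      ∀ (e : ε) (q : κ × ε), (∑ y, T q (y, e) * w y) = 0 := by
    intro w hw e₀ q
    set u : ε → (κ × ε) → ℂ := fun e pq => if pq.2 = e then w pq.1 else 0 with hu
    have hmv : ∀ (e : ε) (pq : κ × ε), (T *ᵥ u e) pq = ∑ y, T pq (y, e) * w y := by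
      intro e pq
      show ∑ q', T pq q' * u e q' = _
      rw [Fintype.sum_prod_type]
      simp only [hu, mul_ite, mul_zero]
      exact Finset.sum_congr rfl fun y _ => Finset.sum_ite_eq' _ _ _ |>.trans (by simp)
    have hQ : ∀ e, dotProduct (star (u e)) (T *ᵥ u e)
        = ∑ x, star (w x) * (∑ y, T (x, e) (y, e) * w y) := by
      intro e
      rw [dotProduct, Fintype.sum_prod_type]
      simp only [Pi.star_apply, hu, apply_ite star, star_zero, ite_mul, zero_mul]
      refine Finset.sum_congr rfl fun x _ => ?_
      rw [Finset.sum_ite_eq' _ _ (fun f => star (w x) * (T *ᵥ u e) (x, f))]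
      simp [hmv e (x, e)]
    have hQsum : ∑ e, dotProduct (star (u e)) (T *ᵥ u e) = 0 := by
      simp only [hQ]
      rw [Finset.sum_comm]
      have : ∀ x, ∑ e, star (w x) * (∑ y, T (x, e) (y, e) * w y)
          = star (w x) * (v x * ∑ y, star (v y) * w y) := by
        intro x
        rw [← Finset.mul_sum]
        congr 1
        rw [Finset.sum_comm]
        rw [Finset.mul_sum]
        refine Finset.sum_congr rfl fun y _ => ?_
        rw [← Finset.sum_mul, hptr x y]
        ring
      simp only [this, hw, mul_zero]
      simp
    have hQ0 : ∀ e, dotProduct (star (u e)) (T *ᵥ u e) = 0 := by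
      intro e
      have hnn : ∀ e ∈ Finset.univ (α := ε), 0 ≤ dotProduct (star (u e)) (T *ᵥ u e) :=
        fun e _ => hT.dotProduct_mulVec_nonneg (u e)
      exact (Finset.sum_eq_zero_iff_of_nonneg hnn).mp hQsum e (Finset.mem_univ e)
    have h1 := (hT.dotProduct_mulVec_zero_iff (u e₀)).mp (hQ0 e₀)
    have h2 := congrFun h1 q
    rw [hmv e₀ q] at h2
    exact h2
  -- column structure
  have hcol : ∀ (q : κ × ε) (e : ε) (y' : κ),
      T q (y', e) = star (v y') * (∑ y, T q (y, e) * v y) := by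
    intro q e y'
    have hw : (∑ y, star (v y) * ((if y = y' then 1 else 0) - star (v y') * v y)) = 0 := by
      simp only [mul_sub, Finset.sum_sub_distrib, mul_ite, mul_one, mul_zero]
      rw [Finset.sum_ite_eq' _ _ (fun y => star (v y))]
      have : ∑ y, star (v y) * (star (v y') * v y) = star (v y') * ∑ y, star (v y) * v y := by
        rw [Finset.mul_sum]; exact Finset.sum_congr rfl fun y _ => by ring
      rw [this, hnorm]
      simp
    have h0 := hker _ hw e q
    simp only [mul_sub, Finset.sum_sub_distrib, mul_ite, mul_one, mul_zero] at h0
    rw [Finset.sum_ite_eq' _ _ (fun y => T q (y, e))] at h0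
    simp only [Finset.mem_univ, if_true] at h0
    have : ∑ y, T q (y, e) * (star (v y') * v y) = star (v y') * ∑ y, T q (y, e) * v y := by
      rw [Finset.mul_sum]; exact Finset.sum_congr rfl fun y _ => by ring
    rw [this] at h0
    exact sub_eq_zero.mp h0
  let g : (κ × ε) → ε → ℂ := fun q e => ∑ y, T q (y, e) * v y
  have hgdef : ∀ q e, g q e = ∑ y, T q (y, e) * v y := fun _ _ => rfl
  have hherm : ∀ (a b : κ × ε), T a b = star (T b a) := by
    intro a b
    conv_lhs => rw [← hT.1]
    rfl
  have hcol' : ∀ (q : κ × ε) (e : ε) (y' : κ), T q (y', e) = star (v y') * g q e := by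
    intro q e y'
    rw [hgdef]
    exact hcol q e y'
  have hrow : ∀ x f y e, T (x, f) (y, e) = v x * star (g (y, e) f) := by
    intro x f y e
    rw [hherm (x, f) (y, e), hcol' (y, e) f x, star_mul', star_star]
    all_goals exact mul_comm _ _
  let σ : Matrix ε ε ℂ := Matrix.of fun f e => ∑ y, star (g (y, e) f) * v y
  have hσdef : ∀ f e, σ f e = ∑ y, star (g (y, e) f) * v y := fun _ _ => rfl
  have hgf : ∀ x f e, g (x, f) e = v x * σ f e := by
    intro x f e
    rw [hgdef, hσdef]
    calc ∑ y, T (x, f) (y, e) * v y = ∑ y, (v x * star (g (y, e) f)) * v y :=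
          Finset.sum_congr rfl fun y _ => by rw [hrow]
      _ = v x * ∑ y, star (g (y, e) f) * v y := by
          rw [Finset.mul_sum]; exact Finset.sum_congr rfl fun y _ => by ring
  have hform : ∀ x f y e, T (x, f) (y, e) = v x * star (v y) * σ f e := by
    intro x f y e
    rw [hcol' (x, f) e y, hgf]
    ring
  -- a point where v doesn't vanish
  have hx₀ : ∃ x₀, v x₀ ≠ 0 := by
    by_contra h
    push_neg at h
    rw [Finset.sum_congr rfl (fun i _ => by rw [h i, zero_mul])] at hsum
    simp at hsum
  obtain ⟨x₀, hx₀⟩ := hx₀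
  have hvv : v x₀ * star (v x₀) ≠ 0 := mul_ne_zero hx₀ (star_ne_zero.mpr hx₀)
  have htσ : σ.trace = 1 := by
    have h1 := hptr x₀ x₀
    rw [Finset.sum_congr rfl (fun e (_ : e ∈ Finset.univ) => hform x₀ e x₀ e),
      ← Finset.mul_sum] at h1
    have h2 : (v x₀ * star (v x₀)) * ∑ e, σ e e = (v x₀ * star (v x₀)) * 1 := by
      rw [mul_one, h1]
    have h3 := mul_left_cancel₀ hvv h2
    simpa [Matrix.trace, Matrix.diag] using h3
  have hσH : σ.IsHermitian := by
    ext f e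
    rw [Matrix.conjTranspose_apply]
    have h1 := hherm (x₀, f) (x₀, e)
    rw [hform, hform] at h1
    have h2 : (v x₀ * star (v x₀)) * σ f e = (v x₀ * star (v x₀)) * star (σ e f) := by
      calc (v x₀ * star (v x₀)) * σ f e
          = v x₀ * star (v x₀) * σ f e := by ring
        _ = star (v x₀ * star (v x₀) * σ e f) := h1
        _ = star (σ e f) * (star (star (v x₀)) * star (v x₀)) := by
            rw [star_mul', star_mul']; ring
        _ = (v x₀ * star (v x₀)) * star (σ e f) := by rw [star_star]; ring
    exact (mul_left_cancel₀ hvv h2).symm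
  have hσpos : ∀ u : ε → ℂ, 0 ≤ dotProduct (star u) (σ *ᵥ u) := by
    intro u
    let U : (κ × ε) → ℂ := fun pq => v pq.1 * u pq.2
    have hmvσ : ∀ f, (σ *ᵥ u) f = ∑ e, σ f e * u e := fun f => rfl
    have hmv : ∀ x f, (T *ᵥ U) (x, f) = v x * (σ *ᵥ u) f := by
      intro x f
      show ∑ q', T (x, f) q' * U q' = _
      rw [Fintype.sum_prod_type]
      have h1 : ∀ (y : κ) (e : ε), T (x, f) (y, e) * U (y, e)
          = (star (v y) * v y) * (v x * (σ f e * u e)) := by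
        intro y e
        rw [hform]
        show v x * star (v y) * σ f e * (v y * u e) = _
        ring
      calc ∑ y, ∑ e, T (x, f) (y, e) * U (y, e)
          = ∑ y, ∑ e, (star (v y) * v y) * (v x * (σ f e * u e)) := by
            exact Finset.sum_congr rfl fun y _ => Finset.sum_congr rfl fun e _ => h1 y e
        _ = ∑ y, (star (v y) * v y) * (v x * ∑ e, σ f e * u e) := by
            refine Finset.sum_congr rfl fun y _ => ?_
            rw [← Finset.mul_sum, ← Finset.mul_sum]
        _ = (∑ y, star (v y) * v y) * (v x * ∑ e, σ f e * u e) := by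
            rw [Finset.sum_mul]
        _ = v x * (σ *ᵥ u) f := by rw [hnorm, one_mul, hmvσ]
    have hdp : dotProduct (star U) (T *ᵥ U) = dotProduct (star u) (σ *ᵥ u) := by
      rw [dotProduct, dotProduct, Fintype.sum_prod_type]
      calc ∑ x, ∑ f, star (U (x, f)) * (T *ᵥ U) (x, f)
          = ∑ x, ∑ f, (star (v x) * v x) * (star (u f) * (σ *ᵥ u) f) := by
            refine Finset.sum_congr rfl fun x _ => Finset.sum_congr rfl fun f _ => ?_
            rw [hmv]
            show star (v x * u f) * (v x * (σ *ᵥ u) f) = _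
            rw [star_mul']
            ring
        _ = ∑ x, (star (v x) * v x) * ∑ f, star (u f) * (σ *ᵥ u) f := by
            refine Finset.sum_congr rfl fun x _ => ?_
            all_goals rw [← Finset.mul_sum]
        _ = (∑ x, star (v x) * v x) * ∑ f, star (u f) * (σ *ᵥ u) f := by
            rw [Finset.sum_mul]
        _ = ∑ f, star (u f) * (σ *ᵥ u) f := by rw [hnorm, one_mul]
    rw [← hdp]
    exact hT.dotProduct_mulVec_nonneg U
  exact ⟨σ, Matrix.PosSemidef.of_dotProduct_mulVec_nonneg hσH hσpos, htσ, hform⟩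

end Helpers6


set_option maxHeartbeats 1000000 in
/-- for a pure tripartite state `ψ_ABC`,
`N_sq(A;C|B)_ψ = (1/2) I(A;C|B)_ψ = (1/2) I(A;C)_ψ`; and if moreover
`ψ_ABC = φ_AC ⊗ ϕ_B` with `φ, ϕ` pure, then
`N_sq(A;C|B)_ψ = (1/2) I(A;C)_φ = S(A)_φ`. -/
theorem sQNM_of_pure_state {α β γ : Type*} [Fintype α] [Fintype β] [Fintype γ]
    [DecidableEq α] [DecidableEq β] [DecidableEq γ]
    (ψ : Matrix (α × β × γ) (α × β × γ) ℂ) (hψ : IsDensity ψ) (hpure : IsPure ψ) :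
    (sQNM ψ = (1/2) * qcmi ψ ∧ sQNM ψ = (1/2) * mutInfoAC ψ) ∧
    (∀ (φ : Matrix (α × γ) (α × γ) ℂ) (ϕ : Matrix β β ℂ),
      IsDensity φ → IsDensity ϕ → IsPure φ → IsPure ϕ →
      (∀ a b c a' b' c', ψ (a, b, c) (a', b', c') = φ (a, c) (a', c') * ϕ b b') →
      sQNM ψ = (1/2) * (vnEntropy (fun (u v : α) => ∑ c : γ, φ (u, c) (v, c))
          + vnEntropy (fun (u v : γ) => ∑ a : α, φ (a, u) (a, v)) - vnEntropy φ) ∧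
      sQNM ψ = vnEntropy (fun (u v : α) => ∑ c : γ, φ (u, c) (v, c))) := by
  classical
  obtain ⟨hPSD, htr⟩ := hψ
  obtain ⟨v, hv⟩ := hpure
  have hψe : ∀ p q, ψ p q = v p * star (v q) := fun p q => by
    rw [hv]; rfl
  have hsum : ∑ p, v p * star (v p) = 1 := sum_mul_star_eq_one (hv ▸ htr)
  have hSψ : vnEntropy ψ = 0 := by rw [hv]; exact vnEntropy_pure v (hv ▸ htr)
  -- named marginal matrices
  set MAB : Matrix (α × β) (α × β) ℂ :=
    Matrix.of fun s t => ∑ c, v (s.1, s.2, c) * star (v (t.1, t.2, c)) with hMABdef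
  set MBC : Matrix (β × γ) (β × γ) ℂ :=
    Matrix.of fun s t => ∑ a, v (a, s.1, s.2) * star (v (a, t.1, t.2)) with hMBCdef
  set MA : Matrix α α ℂ :=
    Matrix.of fun a a' => ∑ s : β × γ, v (a, s) * star (v (a', s)) with hMAdef
  set MB : Matrix β β ℂ :=
    Matrix.of fun b b' => ∑ s : α × γ, v (s.1, b, s.2) * star (v (s.1, b', s.2)) with hMBdef
  set MC : Matrix γ γ ℂ :=
    Matrix.of fun c c' => ∑ s : α × β, v (s.1, s.2, c) * star (v (s.1, s.2, c')) with hMCdef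
  set MAC : Matrix (α × γ) (α × γ) ℂ :=
    Matrix.of fun s t => ∑ b, v (s.1, b, s.2) * star (v (t.1, b, t.2)) with hMACdef
  -- identification of the marginals of ψ
  have hMAB : margAB ψ = MAB := by
    funext x y
    exact Finset.sum_congr rfl fun c _ => hψe _ _
  have hMBC : margBC ψ = MBC := by
    funext x y
    exact Finset.sum_congr rfl fun a _ => hψe _ _
  have hMAC : margAC ψ = MAC := by
    funext x y
    exact Finset.sum_congr rfl fun b _ => hψe _ _
  have hMA : margA ψ = MA := by
    funext a a'
    show ∑ b, ∑ c, ψ (a, b, c) (a', b, c) = ∑ s : β × γ, v (a, s) * star (v (a', s))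
    rw [Fintype.sum_prod_type]
    exact Finset.sum_congr rfl fun b _ => Finset.sum_congr rfl fun c _ => hψe _ _
  have hMB : margB ψ = MB := by
    funext b b'
    show ∑ a, ∑ c, ψ (a, b, c) (a, b', c) = ∑ s : α × γ, v (s.1, b, s.2) * star (v (s.1, b', s.2))
    rw [Fintype.sum_prod_type]
    exact Finset.sum_congr rfl fun a _ => Finset.sum_congr rfl fun c _ => hψe _ _
  have hMC : margC ψ = MC := by
    funext c c'
    show ∑ a, ∑ b, ψ (a, b, c) (a, b, c') = ∑ s : α × β, v (s.1, s.2, c) * star (v (s.1, s.2, c'))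
    rw [Fintype.sum_prod_type]
    exact Finset.sum_congr rfl fun a _ => Finset.sum_congr rfl fun b _ => hψe _ _
  -- pure state entropy dualities
  have hAB_C : vnEntropy MAB = vnEntropy MC :=
    vnEntropy_gram_comm (m := α × β) (p := γ) (fun q => v (q.1.1, q.1.2, q.2))
  have hA_BC : vnEntropy MA = vnEntropy MBC :=
    vnEntropy_gram_comm (m := α) (p := β × γ) v
  have hB_AC : vnEntropy MB = vnEntropy MAC :=
    vnEntropy_gram_comm (m := β) (p := α × γ) (fun q => v (q.2.1, q.1, q.2.2))
  -- positivity and traces of the marginals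
  have hMABps : MAB.PosSemidef := by
    have h : MAB = (Matrix.of fun (s : α × β) (c : γ) => v (s.1, s.2, c))
        * (Matrix.of fun (s : α × β) (c : γ) => v (s.1, s.2, c))ᴴ := by
      ext s t
      simp [Matrix.mul_apply, Matrix.conjTranspose_apply, hMABdef]
    rw [h]
    exact Matrix.posSemidef_self_mul_conjTranspose _
  have hMBCps : MBC.PosSemidef := by
    have h : MBC = (Matrix.of fun (s : β × γ) (a : α) => v (a, s.1, s.2))
        * (Matrix.of fun (s : β × γ) (a : α) => v (a, s.1, s.2))ᴴ := by
      ext s t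
      simp [Matrix.mul_apply, Matrix.conjTranspose_apply, hMBCdef]
    rw [h]
    exact Matrix.posSemidef_self_mul_conjTranspose _
  have hMBps : MB.PosSemidef := by
    have h : MB = (Matrix.of fun (b : β) (s : α × γ) => v (s.1, b, s.2))
        * (Matrix.of fun (b : β) (s : α × γ) => v (s.1, b, s.2))ᴴ := by
      ext s t
      simp [Matrix.mul_apply, Matrix.conjTranspose_apply, hMBdef]
    rw [h]
    exact Matrix.posSemidef_self_mul_conjTranspose _
  have hsum3 : ∑ a, ∑ b, ∑ c, v (a, b, c) * star (v (a, b, c)) = 1 := by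
    rw [← hsum, Fintype.sum_prod_type]
    refine Finset.sum_congr rfl fun a _ => ?_
    exact (Fintype.sum_prod_type (fun q : β × γ => v (a, q) * star (v (a, q)))).symm
  have hMABtr : MAB.trace = 1 := by
    show ∑ s : α × β, (∑ c, v (s.1, s.2, c) * star (v (s.1, s.2, c))) = 1
    rw [Fintype.sum_prod_type]
    exact hsum3
  have hMBCtr : MBC.trace = 1 := by
    show ∑ s : β × γ, (∑ a, v (a, s.1, s.2) * star (v (a, s.1, s.2))) = 1
    rw [Fintype.sum_prod_type]
    calc ∑ b, ∑ c, ∑ a, v (a, b, c) * star (v (a, b, c))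
        = ∑ b, ∑ a, ∑ c, v (a, b, c) * star (v (a, b, c)) :=
          Finset.sum_congr rfl fun b _ => Finset.sum_comm
      _ = ∑ a, ∑ b, ∑ c, v (a, b, c) * star (v (a, b, c)) := Finset.sum_comm
      _ = 1 := hsum3
  have hMBtr : MB.trace = 1 := by
    show ∑ b, (∑ s : α × γ, v (s.1, b, s.2) * star (v (s.1, b, s.2))) = 1
    have h1 : ∀ b, ∑ s : α × γ, v (s.1, b, s.2) * star (v (s.1, b, s.2))
        = ∑ a, ∑ c, v (a, b, c) * star (v (a, b, c)) :=
      fun b => Fintype.sum_prod_type _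
    rw [Finset.sum_congr rfl fun b _ => h1 b, Finset.sum_comm]
    exact hsum3
  -- THE KEY STEP: every extension gives the same conditional mutual information
  have key : ∀ (d : ℕ) (τ : Matrix (α × β × γ × Fin d) (α × β × γ × Fin d) ℂ),
      IsDensity τ → traceExt τ = ψ → qcmi (condExt τ) = qcmi ψ := by
    intro d τ hτ hext
    have hτps := hτ.1
    set E : (α × β × γ × Fin d) ≃ ((α × β × γ) × Fin d) :=
      ⟨fun p => ((p.1, p.2.1, p.2.2.1), p.2.2.2), fun q => (q.1.1, q.1.2.1, q.1.2.2, q.2),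
        fun p => rfl, fun q => rfl⟩ with hE
    set T : Matrix ((α × β × γ) × Fin d) ((α × β × γ) × Fin d) ℂ :=
      τ.submatrix E.symm E.symm with hT
    have hTps : T.PosSemidef := hτps.submatrix _
    have hptr : ∀ x y, ∑ e, T (x, e) (y, e) = v x * star (v y) := by
      intro x y
      have h1 := congrFun (congrFun hext x) y
      rw [hψe] at h1
      exact h1
    obtain ⟨σ, hσps, hσtr, hform⟩ := ext_of_pure T hTps v hsum hptr
    have hτe : ∀ (x y : α × β × γ) (f e : Fin d),
        τ (x.1, x.2.1, x.2.2, f) (y.1, y.2.1, y.2.2, e) = v x * star (v y) * σ f e :=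
      fun x y f e => hform x f y e
    -- full state
    have hherm_kron_ψ : (Matrix.kroneckerMap (· * ·) ψ σ).IsHermitian :=
      kron_isHermitian hPSD.1 hσps.1
    have hfull : vnEntropy (condExt τ) = vnEntropy ψ + vnEntropy σ := by
      set gF : (α × (β × Fin d) × γ) ≃ ((α × β × γ) × Fin d) :=
        ⟨fun z => ((z.1, z.2.1.1, z.2.2), z.2.1.2), fun q => (q.1.1, (q.1.2.1, q.2), q.1.2.2),
          fun z => rfl, fun q => rfl⟩ with hgF
      have heq : condExt τ = (Matrix.kroneckerMap (· * ·) ψ σ).submatrix gF gF := by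
        funext z w
        show τ (z.1, z.2.1.1, z.2.2, z.2.1.2) (w.1, w.2.1.1, w.2.2, w.2.1.2)
          = ψ (z.1, z.2.1.1, z.2.2) (w.1, w.2.1.1, w.2.2) * σ z.2.1.2 w.2.1.2
        rw [hτe (z.1, z.2.1.1, z.2.2) (w.1, w.2.1.1, w.2.2) z.2.1.2 w.2.1.2, hψe]
      rw [heq, vnEntropy_submatrix _ hherm_kron_ψ gF]
      exact vnEntropy_kron hPSD hσps htr hσtr
    -- AB marginal
    have hABm : vnEntropy (margAB (condExt τ)) = vnEntropy MAB + vnEntropy σ := by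
      set gAB : (α × (β × Fin d)) ≃ ((α × β) × Fin d) :=
        ⟨fun z => ((z.1, z.2.1), z.2.2), fun q => (q.1.1, (q.1.2, q.2)),
          fun z => rfl, fun q => rfl⟩ with hgAB
      have heq : margAB (condExt τ) = (Matrix.kroneckerMap (· * ·) MAB σ).submatrix gAB gAB := by
        funext x y
        show ∑ c, τ (x.1, x.2.1, c, x.2.2) (y.1, y.2.1, c, y.2.2)
          = MAB (x.1, x.2.1) (y.1, y.2.1) * σ x.2.2 y.2.2
        rw [show MAB (x.1, x.2.1) (y.1, y.2.1)
            = ∑ c, v (x.1, x.2.1, c) * star (v (y.1, y.2.1, c)) from rfl, Finset.sum_mul]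
        exact Finset.sum_congr rfl fun c _ =>
          hτe (x.1, x.2.1, c) (y.1, y.2.1, c) x.2.2 y.2.2
      rw [heq, vnEntropy_submatrix _ (kron_isHermitian hMABps.1 hσps.1) gAB]
      exact vnEntropy_kron hMABps hσps hMABtr hσtr
    -- BC marginal
    have hBCm : vnEntropy (margBC (condExt τ)) = vnEntropy MBC + vnEntropy σ := by
      set gBC : ((β × Fin d) × γ) ≃ ((β × γ) × Fin d) :=
        ⟨fun z => ((z.1.1, z.2), z.1.2), fun q => ((q.1.1, q.2), q.1.2),
          fun z => rfl, fun q => rfl⟩ with hgBC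
      have heq : margBC (condExt τ) = (Matrix.kroneckerMap (· * ·) MBC σ).submatrix gBC gBC := by
        funext x y
        show ∑ a, τ (a, x.1.1, x.2, x.1.2) (a, y.1.1, y.2, y.1.2)
          = MBC (x.1.1, x.2) (y.1.1, y.2) * σ x.1.2 y.1.2
        rw [show MBC (x.1.1, x.2) (y.1.1, y.2)
            = ∑ a, v (a, x.1.1, x.2) * star (v (a, y.1.1, y.2)) from rfl, Finset.sum_mul]
        exact Finset.sum_congr rfl fun a _ =>
          hτe (a, x.1.1, x.2) (a, y.1.1, y.2) x.1.2 y.1.2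
      rw [heq, vnEntropy_submatrix _ (kron_isHermitian hMBCps.1 hσps.1) gBC]
      exact vnEntropy_kron hMBCps hσps hMBCtr hσtr
    -- B marginal
    have hBm : vnEntropy (margB (condExt τ)) = vnEntropy MB + vnEntropy σ := by
      have heq : margB (condExt τ) = Matrix.kroneckerMap (· * ·) MB σ := by
        funext x y
        show ∑ a, ∑ c, τ (a, x.1, c, x.2) (a, y.1, c, y.2) = MB x.1 y.1 * σ x.2 y.2
        rw [show MB x.1 y.1
            = ∑ s : α × γ, v (s.1, x.1, s.2) * star (v (s.1, y.1, s.2)) from rfl,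
          Finset.sum_mul, Fintype.sum_prod_type]
        exact Finset.sum_congr rfl fun a _ => Finset.sum_congr rfl fun c _ =>
          hτe (a, x.1, c) (a, y.1, c) x.2 y.2
      rw [heq]
      exact vnEntropy_kron hMBps hσps hMBtr hσtr
    show vnEntropy (margAB (condExt τ)) + vnEntropy (margBC (condExt τ))
        - vnEntropy (condExt τ) - vnEntropy (margB (condExt τ))
      = vnEntropy (margAB ψ) + vnEntropy (margBC ψ) - vnEntropy ψ - vnEntropy (margB ψ)
    rw [hABm, hBCm, hfull, hBm, hMAB, hMBC, hMB]
    ring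
  -- the trivial extension
  set E1 : (α × β × γ × Fin 1) ≃ (α × β × γ) :=
    ⟨fun p => (p.1, p.2.1, p.2.2.1), fun x => (x.1, x.2.1, x.2.2, 0),
      fun p => by
        refine Prod.ext rfl (Prod.ext rfl (Prod.ext rfl ?_))
        exact Subsingleton.elim _ _,
      fun x => rfl⟩ with hE1
  set τ₀ : Matrix (α × β × γ × Fin 1) (α × β × γ × Fin 1) ℂ := ψ.submatrix E1 E1 with hτ₀
  have hτ₀d : IsDensity τ₀ := by
    refine ⟨hPSD.submatrix _, ?_⟩
    show ∑ p, ψ (E1 p) (E1 p) = 1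
    rw [← htr]
    exact Equiv.sum_comp E1 (fun x => ψ x x)
  have hτ₀e : traceExt τ₀ = ψ := by
    funext x y
    show ∑ _e : Fin 1, ψ (x.1, x.2.1, x.2.2) (y.1, y.2.1, y.2.2) = ψ x y
    simp
  -- the set of achievable values is a singleton
  have hset : { x : ℝ |
      ∃ (d : ℕ) (τ : Matrix (α × β × γ × Fin d) (α × β × γ × Fin d) ℂ),
        IsDensity τ ∧ traceExt τ = ψ ∧ x = qcmi (condExt τ) } = {qcmi ψ} := by
    ext x
    constructor
    · rintro ⟨d, τ, hτd, hτe, rfl⟩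
      exact key d τ hτd hτe
    · rintro hx
      rw [Set.mem_singleton_iff] at hx
      exact ⟨1, τ₀, hτ₀d, hτ₀e, hx.trans (key 1 τ₀ hτ₀d hτ₀e).symm⟩
  have h1 : sQNM ψ = (1/2) * qcmi ψ := by
    rw [sQNM, hset, csInf_singleton]
  have hq : qcmi ψ = mutInfoAC ψ := by
    show vnEntropy (margAB ψ) + vnEntropy (margBC ψ) - vnEntropy ψ - vnEntropy (margB ψ)
      = vnEntropy (margA ψ) + vnEntropy (margC ψ) - vnEntropy (margAC ψ)
    rw [hMAB, hMBC, hMB, hMA, hMC, hMAC, hSψ, hAB_C, ← hA_BC, hB_AC]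
    ring
  have h2 : sQNM ψ = (1/2) * mutInfoAC ψ := by rw [h1, hq]
  refine ⟨⟨h1, h2⟩, ?_⟩
  intro φ ϕ hφd hϕd hφp hϕp hfac
  have hϕtr : ∑ b, ϕ b b = 1 := by
    have := hϕd.2
    simpa [Matrix.trace, Matrix.diag] using this
  have hA : margA ψ = fun (u v : α) => ∑ c : γ, φ (u, c) (v, c) := by
    funext u u'
    show ∑ b, ∑ c, ψ (u, b, c) (u', b, c) = ∑ c, φ (u, c) (u', c)
    calc ∑ b, ∑ c, ψ (u, b, c) (u', b, c)
        = ∑ b, ∑ c, φ (u, c) (u', c) * ϕ b b :=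
          Finset.sum_congr rfl fun b _ => Finset.sum_congr rfl fun c _ => hfac u b c u' b c
      _ = ∑ c, ∑ b, φ (u, c) (u', c) * ϕ b b := Finset.sum_comm
      _ = ∑ c, φ (u, c) (u', c) * ∑ b, ϕ b b := by
          refine Finset.sum_congr rfl fun c _ => ?_
          all_goals rw [← Finset.mul_sum]
      _ = ∑ c, φ (u, c) (u', c) := by
          rw [hϕtr]
          simp
  have hC : margC ψ = fun (u v : γ) => ∑ a : α, φ (a, u) (a, v) := by
    funext u u'
    show ∑ a, ∑ b, ψ (a, b, u) (a, b, u') = ∑ a, φ (a, u) (a, u')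
    refine Finset.sum_congr rfl fun a _ => ?_
    calc ∑ b, ψ (a, b, u) (a, b, u')
        = ∑ b, φ (a, u) (a, u') * ϕ b b :=
          Finset.sum_congr rfl fun b _ => hfac a b u a b u'
      _ = φ (a, u) (a, u') * ∑ b, ϕ b b := by rw [← Finset.mul_sum]
      _ = φ (a, u) (a, u') := by rw [hϕtr, mul_one]
  have hACφ : margAC ψ = φ := by
    funext x y
    show ∑ b, ψ (x.1, b, x.2) (y.1, b, y.2) = φ x y
    calc ∑ b, ψ (x.1, b, x.2) (y.1, b, y.2)
        = ∑ b, φ (x.1, x.2) (y.1, y.2) * ϕ b b :=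
          Finset.sum_congr rfl fun b _ => hfac x.1 b x.2 y.1 b y.2
      _ = φ (x.1, x.2) (y.1, y.2) * ∑ b, ϕ b b := by rw [← Finset.mul_sum]
      _ = φ x y := by rw [hϕtr, mul_one]
  have hG1 : sQNM ψ = (1/2) * (vnEntropy (fun (u v : α) => ∑ c : γ, φ (u, c) (v, c))
      + vnEntropy (fun (u v : γ) => ∑ a : α, φ (a, u) (a, v)) - vnEntropy φ) := by
    rw [h2]
    show (1/2) * (vnEntropy (margA ψ) + vnEntropy (margC ψ) - vnEntropy (margAC ψ)) = _
    rw [hA, hC, hACφ]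
  refine ⟨hG1, ?_⟩
  obtain ⟨w, hw⟩ := hφp
  have hSφ : vnEntropy φ = 0 := by rw [hw]; exact vnEntropy_pure w (hw ▸ hφd.2)
  have hwse : ∀ p q, φ p q = w p * star (w q) := fun p q => by rw [hw]; rfl
  have hXA : (fun (u v : α) => ∑ c : γ, φ (u, c) (v, c))
      = Matrix.of fun (u v : α) => ∑ c : γ, w (u, c) * star (w (v, c)) := by
    funext u u'
    exact Finset.sum_congr rfl fun c _ => hwse _ _
  have hXC : (fun (u v : γ) => ∑ a : α, φ (a, u) (a, v))
      = Matrix.of fun (u v : γ) => ∑ a : α, w (a, u) * star (w (a, v)) := by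
    funext u u'
    exact Finset.sum_congr rfl fun a _ => hwse _ _
  have hgram : vnEntropy (Matrix.of fun (u v : α) => ∑ c : γ, w (u, c) * star (w (v, c)))
      = vnEntropy (Matrix.of fun (u v : γ) => ∑ a : α, w (a, u) * star (w (a, v))) :=
    vnEntropy_gram_comm (m := α) (p := γ) w
  rw [hG1, hXA, hXC, hSφ, ← hgram]
  ring
end SQNM
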